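/- Let α : H → N and f : N → N' be finite-meet preserving maps between frames. Then Gl(f ∘ α), together with the maps π₁'* : N' → Gl(fα), n' ↦ (n',1), and f' : Gl(α) → Gl(fα), (n,h) ↦ (f(n),h), is the pushout in Frm∧ of π₁* : N → Gl(α), n ↦ (n,1), along f. -/

import Mathlib

section
variable {N N' H : Type*} [Order.Frame N] [Order.Frame N'] [Order.Frame H]

/-- The Artin glueing `Gl(γ) = {(n,h) : n ≤ γ h}` of `γ : H → M`. -/
def Gl {M : Type*} [Order.Frame M] (γ : H → M) : Type _ :=
  {p : M × H // p.1 ≤ γ p.2}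

instance {M : Type*} [Order.Frame M] (γ : H → M) : PartialOrder (Gl γ) :=
  inferInstanceAs (PartialOrder {p : M × H // p.1 ≤ γ p.2})

/-- Componentwise binary meet on `Gl(γ)`. -/
def Gl.inf {M : Type*} [Order.Frame M] {γ : H → M}
    (hγ_inf : ∀ a b, γ (a ⊓ b) = γ a ⊓ γ b) (p q : Gl γ) : Gl γ :=
  ⟨p.1 ⊓ q.1, le_trans (inf_le_inf p.2 q.2) (le_of_eq (hγ_inf _ _).symm)⟩

/-- The top element of `Gl(γ)`. -/
def Gl.top {M : Type*} [Order.Frame M] {γ : H → M} (hγ_top : γ ⊤ = ⊤) : Gl γ :=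
  ⟨⊤, hγ_top.ge⟩

/-- The kernel map `π₁* : M → Gl(γ)`, `m ↦ (m, ⊤)`. -/
def Gl.ker {M : Type*} [Order.Frame M] {γ : H → M} (hγ_top : γ ⊤ = ⊤)
    (m : M) : Gl γ :=
  ⟨(m, ⊤), le_top.trans hγ_top.ge⟩

/-- The comparison map `f' : Gl(α) → Gl(f ∘ α)`, `(n,h) ↦ (f n, h)`,
for a finite-meet preserving `f : N → N'`. -/
def Gl.push {α : H → N} {f : N → N'}
    (hf_inf : ∀ a b, f (a ⊓ b) = f a ⊓ f b) (p : Gl α) : Gl (f ∘ α) :=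
  ⟨(f p.1.1, p.1.2), by
    have h1 : p.1.1 ⊓ α p.1.2 = p.1.1 := inf_eq_left.mpr p.2
    have h2 : f p.1.1 = f p.1.1 ⊓ f (α p.1.2) := by rw [← hf_inf, h1]
    exact h2.trans_le inf_le_right⟩

end

/-- The pushout in `Frm∧` of the kernel `π₁* : N → Gl(α)` along
`f : N → N'` is `Gl(f ∘ α)`, with injections `π₁'* : N' → Gl(f∘α)`,
`n' ↦ (n',⊤)`, and `f' : Gl(α) → Gl(f∘α)`, `(n,h) ↦ (f n, h)`:
the square commutes and the universal property holds, with the mediating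
morphism required to be finite-meet preserving. -/
theorem glueing_pushout
    {N N' H : Type*} [Order.Frame N] [Order.Frame N'] [Order.Frame H]
    (α : H → N) (hα_inf : ∀ a b, α (a ⊓ b) = α a ⊓ α b) (hα_top : α ⊤ = ⊤)
    (f : N → N') (hf_inf : ∀ a b, f (a ⊓ b) = f a ⊓ f b) (hf_top : f ⊤ = ⊤) :
    -- `f' ∘ π₁* = π₁'* ∘ f`
    (∀ n : N, Gl.push (α := α) hf_inf (Gl.ker hα_top n) =
        Gl.ker (γ := f ∘ α) (by simp [hα_top, hf_top]) (f n)) ∧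
    -- the universal property of the pushout in `Frm∧`
      (∀ (X : Type*) [Order.Frame X] (p : Gl α → X) (q : N' → X),
        (∀ x y : Gl α, p (Gl.inf hα_inf x y) = p x ⊓ p y) →
        p (Gl.top hα_top) = ⊤ →
        (∀ a b : N', q (a ⊓ b) = q a ⊓ q b) → q ⊤ = ⊤ →
        (∀ n : N, p (Gl.ker hα_top n) = q (f n)) →
        ∃! ℓ : Gl (f ∘ α) → X,
          (∀ x y : Gl (f ∘ α),
              ℓ (Gl.inf (γ := f ∘ α) (fun a b => by simp [hα_inf, hf_inf]) x y) =
                ℓ x ⊓ ℓ y) ∧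
            ℓ (Gl.top (γ := f ∘ α) (by simp [hα_top, hf_top])) = ⊤ ∧
            (∀ x : Gl α, ℓ (Gl.push hf_inf x) = p x) ∧
            (∀ n' : N', ℓ (Gl.ker (γ := f ∘ α) (by simp [hα_top, hf_top]) n') = q n')) := by
  constructor
  · intro n
    apply Subtype.ext
    simp [Gl.push, Gl.ker]
  · intro X _ p q hp_inf hp_top hq_inf hq_top hcomm
    have htopGl : (⟨(α (⊤ : H), (⊤ : H)), le_rfl⟩ : Gl α) = Gl.top hα_top := by
      apply Subtype.ext
      show (α (⊤ : H), (⊤ : H)) = ((⊤ : N), (⊤ : H))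
      rw [hα_top]
    refine ⟨fun x => p ⟨(α x.1.2, x.1.2), le_rfl⟩ ⊓ q x.1.1, ⟨?_, ?_, ?_, ?_⟩, ?_⟩
    · intro x y
      have h1 : (Gl.inf (γ := f ∘ α) (fun a b => by simp [hα_inf, hf_inf]) x y).1
          = (x.1.1 ⊓ y.1.1, x.1.2 ⊓ y.1.2) := rfl
      have h2 : (⟨(α (x.1.2 ⊓ y.1.2), x.1.2 ⊓ y.1.2), le_rfl⟩ : Gl α)
          = Gl.inf hα_inf ⟨(α x.1.2, x.1.2), le_rfl⟩ ⟨(α y.1.2, y.1.2), le_rfl⟩ := by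
        apply Subtype.ext
        show (α (x.1.2 ⊓ y.1.2), x.1.2 ⊓ y.1.2) = (α x.1.2 ⊓ α y.1.2, x.1.2 ⊓ y.1.2)
        rw [hα_inf]
      simp only [h1, h2, hp_inf, hq_inf]
      rw [inf_inf_inf_comm]
      exact congrArg (· ⊓ _) (hp_inf _ _)
    · show p ⟨(α ((⊤ : N' × H).2), (⊤ : N' × H).2), le_rfl⟩ ⊓ q ((⊤ : N' × H).1) = ⊤
      have e1 : ((⊤ : N' × H).2) = (⊤ : H) := rfl
      have e2 : ((⊤ : N' × H).1) = (⊤ : N') := rfl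
      rw [e2, hq_top, inf_top_eq]
      exact htopGl ▸ hp_top
    · intro x
      have h1 : (Gl.push (α := α) hf_inf x).1 = (f x.1.1, x.1.2) := rfl
      simp only [h1, ← hcomm]
      refine (hp_inf _ _).symm.trans ?_
      congr 1
      apply Subtype.ext
      have hx : α x.1.2 ⊓ x.1.1 = x.1.1 := inf_eq_right.mpr x.2
      show (α x.1.2 ⊓ x.1.1, x.1.2 ⊓ ⊤) = x.1
      rw [hx, inf_top_eq]
    · intro n'
      show p ⟨(α ((Gl.ker (γ := f ∘ α) (by simp [hα_top, hf_top]) n').1.2),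
          (Gl.ker (γ := f ∘ α) (by simp [hα_top, hf_top]) n').1.2), le_rfl⟩ ⊓
          q ((Gl.ker (γ := f ∘ α) (by simp [hα_top, hf_top]) n').1.1) = q n'
      have : (Gl.ker (γ := f ∘ α) (by simp [hα_top, hf_top]) n').1 = (n', (⊤ : H)) := rfl
      rw [this]
      rw [show (⟨(α (⊤ : H), (⊤ : H)), le_rfl⟩ : Gl α) = Gl.top hα_top from htopGl,
        hp_top, top_inf_eq]
    · intro m hm
      obtain ⟨hm_inf, hm_top, hm_push, hm_ker⟩ := hm
      funext x
      obtain ⟨⟨n', h⟩, hle⟩ := x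
      have key : (⟨(n', h), hle⟩ : Gl (f ∘ α)) =
          Gl.inf (γ := f ∘ α) (fun a b => by simp [hα_inf, hf_inf])
            (Gl.push hf_inf ⟨(α h, h), le_rfl⟩)
            (Gl.ker (γ := f ∘ α) (by simp [hα_top, hf_top]) n') := by
        apply Subtype.ext
        have hn : f (α h) ⊓ n' = n' := inf_eq_right.mpr hle
        show (n', h) = (f (α h) ⊓ n', h ⊓ ⊤)
        rw [hn, inf_top_eq]
      conv_lhs => rw [key]
      rw [hm_inf]
      exact congrArg₂ (· ⊓ ·) (hm_push _) (hm_ker _)
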